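/- There exists a constant c₀ > 0 such that for every λ with λ₁ < λ < 1 and every CE fixed point x, one has x'(0) ≥ −c₀ · e^{−π(1−λ)/(2ω)}, where ω = (1/2)√(−λ² + 2(2d−1)λ − 1). -/

import Mathlib

open MeasureTheory

/-- Generating function ψ(x) = Σ_{k≥0} P(k) x^k. -/
noncomputable def genFun (P : ℕ → ℝ) (x : ℝ) : ℝ := ∑' k : ℕ, P k * x ^ k

/-- Context: P is a probability distribution on ℕ with mean d ∈ (1,∞), and ρ ∈ [0,1)
is the smallest fixed point of its generating function on [0,1]. -/
structure CEContext (P : ℕ → ℝ) (d ρ : ℝ) : Prop where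
  P_nonneg : ∀ k, 0 ≤ P k
  P_sum_one : ∑' k : ℕ, P k = 1
  mean_summable : Summable (fun k : ℕ => (k : ℝ) * P k)
  mean_eq : ∑' k : ℕ, (k : ℝ) * P k = d
  d_gt_one : 1 < d
  rho_nonneg : 0 ≤ ρ
  rho_lt_one : ρ < 1
  rho_fixed : genFun P ρ = ρ
  rho_least : ∀ y : ℝ, 0 ≤ y → y ≤ 1 → genFun P y = y → ρ ≤ y

namespace CEAux

variable {P : ℕ → ℝ} {d ρ : ℝ}

lemma summableP (hctx : CEContext P d ρ) : Summable P := by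
  by_contra h
  have := tsum_eq_zero_of_not_summable h
  rw [hctx.P_sum_one] at this
  norm_num at this

lemma summable_genFun (hctx : CEContext P d ρ) {y : ℝ} (hy0 : 0 ≤ y) (hy1 : y ≤ 1) :
    Summable (fun k : ℕ => P k * y ^ k) := by
  apply (summableP hctx).of_nonneg_of_le
    (fun k => mul_nonneg (hctx.P_nonneg k) (pow_nonneg hy0 k))
  intro k
  calc P k * y ^ k ≤ P k * 1 := by
        exact mul_le_mul_of_nonneg_left (pow_le_one₀ hy0 hy1) (hctx.P_nonneg k)
    _ = P k := mul_one _

lemma genFun_nonneg (hctx : CEContext P d ρ) {y : ℝ} (hy0 : 0 ≤ y) :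
    0 ≤ genFun P y :=
  tsum_nonneg fun k => mul_nonneg (hctx.P_nonneg k) (pow_nonneg hy0 k)

lemma genFun_le_one (hctx : CEContext P d ρ) {y : ℝ} (hy0 : 0 ≤ y) (hy1 : y ≤ 1) :
    genFun P y ≤ 1 := by
  rw [← hctx.P_sum_one]
  apply Summable.tsum_le_tsum _ (summable_genFun hctx hy0 hy1) (summableP hctx)
  intro k
  calc P k * y ^ k ≤ P k * 1 :=
        mul_le_mul_of_nonneg_left (pow_le_one₀ hy0 hy1) (hctx.P_nonneg k)
    _ = P k := mul_one _

lemma genFun_mono (hctx : CEContext P d ρ) {y z : ℝ} (hy0 : 0 ≤ y) (hyz : y ≤ z) (hz1 : z ≤ 1) :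
    genFun P y ≤ genFun P z := by
  apply Summable.tsum_le_tsum _ (summable_genFun hctx hy0 (hyz.trans hz1))
    (summable_genFun hctx (hy0.trans hyz) hz1)
  intro k
  exact mul_le_mul_of_nonneg_left (pow_le_pow_left₀ hy0 hyz k) (hctx.P_nonneg k)

/-- tangent line bound: ψ(y) ≥ 1 + d (y − 1) on [0,1] (indeed for y ≥ −1). -/
lemma genFun_tangent (hctx : CEContext P d ρ) {y : ℝ} (hy0 : 0 ≤ y) (hy1 : y ≤ 1) :
    1 + d * (y - 1) ≤ genFun P y := by
  have hsum1 : Summable (fun k : ℕ => P k * y ^ k) := summable_genFun hctx hy0 hy1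
  have hsum2 : Summable P := summableP hctx
  have hsum3 : Summable (fun k : ℕ => (y - 1) * ((k : ℝ) * P k)) :=
    hctx.mean_summable.mul_left _
  have key : 0 ≤ ∑' k : ℕ, (P k * y ^ k - P k - (y - 1) * ((k : ℝ) * P k)) := by
    apply tsum_nonneg
    intro k
    have hb : 1 + (k : ℝ) * (y - 1) ≤ (1 + (y - 1)) ^ k :=
      one_add_mul_le_pow (by linarith) k
    have : 1 + (k : ℝ) * (y - 1) ≤ y ^ k := by simpa using hb
    nlinarith [hctx.P_nonneg k]
  rw [Summable.tsum_sub (hsum1.sub hsum2) hsum3, Summable.tsum_sub hsum1 hsum2, hctx.P_sum_one,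
    tsum_mul_left, hctx.mean_eq] at key
  have : genFun P y = ∑' k : ℕ, P k * y ^ k := rfl
  linarith [key]

lemma genFun_continuousOn (hctx : CEContext P d ρ) :
    ContinuousOn (genFun P) (Set.Icc 0 1) := by
  apply continuousOn_tsum (u := P)
    (fun k => (continuousOn_const.mul ((continuousOn_pow k)))) (summableP hctx)
  intro k y hy
  simp only [Real.norm_eq_abs, Pi.mul_apply]
  rw [abs_mul, abs_of_nonneg (hctx.P_nonneg k), abs_pow]
  calc P k * |y| ^ k ≤ P k * 1 := by
        apply mul_le_mul_of_nonneg_left _ (hctx.P_nonneg k)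
        apply pow_le_one₀ (abs_nonneg y)
        rw [abs_le]; exact ⟨by linarith [hy.1], hy.2⟩
    _ = P k := mul_one _

end CEAux

/-- A CE fixed point for infection rate λ ∈ (0,1): x : [0,∞) → [0,1] non-increasing,
x(0) = 1, x(t) → ρ, and
x(t) = e^{−λt} + λ e^{−λt} ∫₀ᵗ e^{(λ+1)u} (∫_u^∞ ψ(x(s)) e^{−s} ds) du. -/
def IsCEFixedPoint (P : ℕ → ℝ) (ρ lam : ℝ) (x : ℝ → ℝ) : Prop :=
  (∀ t, 0 ≤ t → x t ∈ Set.Icc (0 : ℝ) 1) ∧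
  AntitoneOn x (Set.Ici 0) ∧
  x 0 = 1 ∧
  Filter.Tendsto x Filter.atTop (nhds ρ) ∧
  (∀ t, 0 ≤ t →
    x t = Real.exp (-(lam * t)) + lam * Real.exp (-(lam * t)) *
      ∫ u in (0:ℝ)..t, Real.exp ((lam + 1) * u) *
        ∫ s in Set.Ioi u, genFun P (x s) * Real.exp (-s))

lemma CEAux.hasDerivAt_exp_mul (c t : ℝ) :
    HasDerivAt (fun t : ℝ => Real.exp (c * t)) (c * Real.exp (c * t)) t := by
  have := (Real.hasDerivAt_exp (c * t)).comp t ((hasDerivAt_id t).const_mul c)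
  simpa [Function.comp_def, mul_comm] using this

lemma CEAux.hasDerivAt_sin_mul (c t : ℝ) :
    HasDerivAt (fun t : ℝ => Real.sin (c * t)) (c * Real.cos (c * t)) t := by
  have := (Real.hasDerivAt_sin (c * t)).comp t ((hasDerivAt_id t).const_mul c)
  simpa [Function.comp_def, mul_comm] using this

lemma CEAux.hasDerivAt_cos_mul (c t : ℝ) :
    HasDerivAt (fun t : ℝ => Real.cos (c * t)) (-(c * Real.sin (c * t))) t := by
  have := (Real.hasDerivAt_cos (c * t)).comp t ((hasDerivAt_id t).const_mul c)
  simpa [Function.comp_def, mul_comm] using this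

lemma CEAux.arith1 {a V v om : ℝ} (h1 : a * V ≤ v * om) (h2 : v ≤ 1) (h3 : 0 < om) :
    a * V ≤ om := by nlinarith

lemma CEAux.arith2 {a B V om : ℝ} (h1 : a * V ≤ om) (hVB : B ≤ V) (ha : 0 ≤ a) :
    a * B ≤ om := by nlinarith

lemma CEAux.arith3 {a B E om e1 pal : ℝ} (h1 : a * B ≤ om) (hBeq : B * (e1 * pal) = E * (2 * om))
    (hpos : 0 < e1 * pal) : a * E * (2 * om) ≤ om * (e1 * pal) := by
  have h2 := mul_le_mul_of_nonneg_right h1 hpos.le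
  calc a * E * (2 * om) = a * (B * (e1 * pal)) := by rw [hBeq]; ring
    _ = a * B * (e1 * pal) := by ring
    _ ≤ om * (e1 * pal) := h2

lemma CEAux.arith4 {aE om e1 e2 pal : ℝ} (h1 : aE * (2 * om) ≤ om * (e1 * pal))
    (h2 : pal ≤ 2) (h3 : e1 ≤ e2) (h4 : 0 < om) (h5 : 0 < e1) : aE ≤ e2 := by
  have k1 : om * (e1 * pal) ≤ om * (e1 * 2) :=
    mul_le_mul_of_nonneg_left (mul_le_mul_of_nonneg_left h2 h5.le) h4.le
  have k3 : aE * (2 * om) ≤ e1 * (2 * om) := by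
    have : om * (e1 * 2) = e1 * (2 * om) := by ring
    linarith
  have k4 : aE ≤ e1 := le_of_mul_le_mul_right k3 (by linarith)
  linarith

lemma CEAux.ratio_helper {vv VV t : ℝ} (ht : t ≠ 0) (hV : VV ≠ 0) :
    vv / t / (VV / t) = vv / VV := by field_simp

lemma CEAux.arith5 {al pi : ℝ} (h1 : pi ≤ 4) (h2 : al ≤ 1 / 2) (h3 : 0 ≤ al) :
    pi * al ≤ 2 := by nlinarith

set_option maxHeartbeats 2000000 in
/-- there is c₀ > 0 such that for all λ ∈ (λ₁, 1) and any CE fixed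
point x, x'(0) ≥ −c₀ e^{−π(1−λ)/(2ω)} where ω = (1/2)√(−λ² + 2(2d−1)λ − 1). -/
theorem ce_xprime_lower_bound {P : ℕ → ℝ} {d ρ : ℝ} (hctx : CEContext P d ρ) :
    ∃ c₀ : ℝ, 0 < c₀ ∧
      ∀ lam : ℝ, 2 * d - 1 - 2 * Real.sqrt (d * (d - 1)) < lam → lam < 1 →
        ∀ x : ℝ → ℝ, IsCEFixedPoint P ρ lam x →
          -(c₀ * Real.exp (-(Real.pi * (1 - lam) /
              (2 * ((1 / 2) * Real.sqrt (-lam ^ 2 + 2 * (2 * d - 1) * lam - 1))))))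
            ≤ derivWithin x (Set.Ici 0) 0 := by
  refine ⟨Real.exp 2, Real.exp_pos 2, ?_⟩
  intro lam hl1 hl2 x hx
  obtain ⟨hxIcc, hxanti, hx0, _hxlim, hxeq⟩ := hx
  have hd := hctx.d_gt_one
  -- basic scalar facts
  set q : ℝ := -lam ^ 2 + 2 * (2 * d - 1) * lam - 1 with hq_def
  have hsq : Real.sqrt (d * (d - 1)) ^ 2 = d * (d - 1) :=
    Real.sq_sqrt (by nlinarith)
  have hsnn : (0:ℝ) ≤ Real.sqrt (d * (d - 1)) := Real.sqrt_nonneg _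
  have hlam0 : 0 < lam := by nlinarith
  have hq0 : 0 < q := by nlinarith
  set al : ℝ := (1 - lam) / 2 with hal_def
  set om : ℝ := 1 / 2 * Real.sqrt q with hom_def
  have hal0 : 0 < al := by simp only [hal_def]; linarith
  have hom0 : 0 < om := by
    simp only [hom_def]
    positivity
  have hom_sq : om ^ 2 = q / 4 := by
    simp only [hom_def]
    rw [mul_pow, Real.sq_sqrt hq0.le]; ring
  have hsum_sq : al ^ 2 + om ^ 2 = lam * (d - 1) := by
    rw [hom_sq, hal_def, hq_def]; ring
  -- the function X : global antitone extension of x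
  set X : ℝ → ℝ := fun t => if 0 ≤ t then x t else 1 with hX_def
  have hX0 : ∀ t, 0 ≤ X t := by
    intro t; simp only [hX_def]
    split
    · exact (hxIcc t (by assumption)).1
    · norm_num
  have hX1 : ∀ t, X t ≤ 1 := by
    intro t; simp only [hX_def]
    split
    · exact (hxIcc t (by assumption)).2
    · norm_num
  have hXanti : Antitone X := by
    intro s t hst
    simp only [hX_def]
    by_cases hs : 0 ≤ s <;> by_cases ht : 0 ≤ t
    · rw [if_pos hs, if_pos ht]; exact hxanti hs ht hst
    · exact absurd (hs.trans hst) ht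
    · rw [if_neg hs, if_pos ht]; exact (hxIcc t ht).2
    · rw [if_neg hs, if_neg ht]
  -- F : the integrand
  set F : ℝ → ℝ := fun s => genFun P (X s) * Real.exp (-s) with hF_def
  have hpsiX0 : ∀ s, 0 ≤ genFun P (X s) := fun s => CEAux.genFun_nonneg hctx (hX0 s)
  have hpsiX1 : ∀ s, genFun P (X s) ≤ 1 := fun s => CEAux.genFun_le_one hctx (hX0 s) (hX1 s)
  have hF0 : ∀ s, 0 ≤ F s := fun s => mul_nonneg (hpsiX0 s) (Real.exp_pos _).le
  have hFle : ∀ s, F s ≤ Real.exp (-s) := by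
    intro s
    simpa using mul_le_mul_of_nonneg_right (hpsiX1 s) (Real.exp_pos (-s)).le
  have hFanti : Antitone F := by
    intro s t hst
    simp only [hF_def]
    have h1 : genFun P (X t) ≤ genFun P (X s) :=
      CEAux.genFun_mono hctx (hX0 t) (hXanti hst) (hX1 s)
    have h2 : Real.exp (-t) ≤ Real.exp (-s) := Real.exp_le_exp.2 (by linarith)
    exact mul_le_mul h1 h2 (Real.exp_pos _).le (hpsiX0 s)
  have hFmeas : Measurable F := hFanti.measurable
  have hFint : ∀ u : ℝ, IntegrableOn F (Set.Ioi u) := by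
    intro u
    have hexp : IntegrableOn (fun s => Real.exp (-s)) (Set.Ioi u) := by
      simpa using exp_neg_integrableOn_Ioi u one_pos
    refine Integrable.mono hexp hFmeas.aestronglyMeasurable ?_
    filter_upwards with s
    rw [Real.norm_eq_abs, Real.norm_eq_abs, abs_of_nonneg (hF0 s),
      abs_of_nonneg (Real.exp_pos _).le]
    exact hFle s
  have hFii : ∀ a b : ℝ, IntervalIntegrable F volume a b := fun a b => hFanti.intervalIntegrable
  -- primitive G and g
  set G : ℝ → ℝ := fun u => ∫ s in (0:ℝ)..u, F s with hG_def
  set g0 : ℝ := ∫ s in Set.Ioi (0:ℝ), F s with hg0_def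
  set g : ℝ → ℝ := fun u => g0 - G u with hg_def
  have hgIoi : ∀ u : ℝ, 0 ≤ u → g u = ∫ s in Set.Ioi u, F s := by
    intro u hu
    have hsplit : ∫ s in Set.Ioi (0:ℝ), F s =
        (∫ s in Set.Ioc 0 u, F s) + ∫ s in Set.Ioi u, F s := by
      rw [← setIntegral_union (Set.Ioc_disjoint_Ioi le_rfl) measurableSet_Ioi
        ((hFint 0).mono_set Set.Ioc_subset_Ioi_self) (hFint u),
        Set.Ioc_union_Ioi_eq_Ioi hu]
    have hGu : G u = ∫ s in Set.Ioc 0 u, F s := intervalIntegral.integral_of_le hu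
    simp only [hg_def, hg0_def, hGu, hsplit]
    ring
  have hgcont : Continuous g := by
    apply continuous_const.sub
    exact intervalIntegral.continuous_primitive hFii 0
  -- H and xt
  set H : ℝ → ℝ := fun t => ∫ u in (0:ℝ)..t, Real.exp ((lam + 1) * u) * g u with hH_def
  have hHderiv : ∀ t : ℝ, HasDerivAt H (Real.exp ((lam + 1) * t) * g t) t := by
    intro t
    exact ((Real.continuous_exp.comp (continuous_const.mul continuous_id)).mul
      hgcont).integral_hasStrictDerivAt 0 t |>.hasDerivAt
  set xt : ℝ → ℝ := fun t => Real.exp (-(lam * t)) + lam * Real.exp (-(lam * t)) * H t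
    with hxt_def
  set xtd : ℝ → ℝ := fun t => -lam * xt t + lam * Real.exp t * g t with hxtd_def
  have hxtanaly : ∀ t : ℝ, HasDerivAt xt (xtd t) t := by
    intro t
    have he : HasDerivAt (fun t : ℝ => Real.exp (-(lam * t))) (-lam * Real.exp (-(lam * t))) t := by
      have := CEAux.hasDerivAt_exp_mul (-lam) t
      simpa [neg_mul] using this
    have h2 : HasDerivAt (fun t : ℝ => lam * Real.exp (-(lam * t)) * H t)
        (lam * (-lam * Real.exp (-(lam * t))) * H t +
          lam * Real.exp (-(lam * t)) * (Real.exp ((lam + 1) * t) * g t)) t :=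
      ((he.const_mul lam).mul (hHderiv t))
    have := he.add h2
    convert this using 1
    · rfl
    · rfl
    · rfl
    have hee : Real.exp (-(lam * t)) * Real.exp ((lam + 1) * t) = Real.exp t := by
      rw [← Real.exp_add]; ring_nf
    simp only [hxtd_def, hxt_def]
    linear_combination (-(lam * g t)) * hee
  -- identification of x with xt on [0,∞)
  have hxeq' : ∀ t : ℝ, 0 ≤ t → x t = xt t := by
    intro t ht
    rw [hxeq t ht]
    simp only [hxt_def, hH_def]
    congr 1
    congr 1
    apply intervalIntegral.integral_congr
    intro u hu
    beta_reduce
    rw [Set.uIcc_of_le ht] at hu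
    have hu0 : 0 ≤ u := hu.1
    have hinner : ∫ s in Set.Ioi u, genFun P (x s) * Real.exp (-s) = ∫ s in Set.Ioi u, F s := by
      apply setIntegral_congr_fun measurableSet_Ioi
      intro s hs
      have hs0 : 0 ≤ s := le_of_lt (lt_of_le_of_lt hu0 hs)
      simp only [hF_def, hX_def, if_pos hs0]
    rw [hinner, ← hgIoi u hu0]
  have hxt0 : xt 0 = 1 := by
    simp [hxt_def, hH_def]
  -- continuity of X and F
  have hxtcont : Continuous xt := by
    have : Differentiable ℝ xt := fun t => (hxtanaly t).differentiableAt
    exact this.continuous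
  have hXeqmax : X = fun t => xt (max t 0) := by
    funext t
    by_cases ht : 0 ≤ t
    · simp only [hX_def, if_pos ht, max_eq_left ht]
      exact hxeq' t ht
    · push_neg at ht
      simp only [hX_def, if_neg (not_le.2 ht), max_eq_right ht.le, hxt0]
  have hXcont : Continuous X := by
    rw [hXeqmax]
    exact hxtcont.comp (continuous_id.max continuous_const)
  have hFcont : Continuous F := by
    simp only [hF_def]
    apply Continuous.mul _ (Real.continuous_exp.comp continuous_neg)
    apply (CEAux.genFun_continuousOn hctx).comp_continuous hXcont
    intro s
    exact ⟨hX0 s, hX1 s⟩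
  -- derivative of g
  have hgderiv : ∀ u : ℝ, HasDerivAt g (-(F u)) u := by
    intro u
    have : HasDerivAt G (F u) u :=
      (hFcont.integral_hasStrictDerivAt 0 u).hasDerivAt
    simpa [hg_def] using this.const_sub g0
  -- w and its derivative
  set w : ℝ → ℝ := fun t => lam * xt t - lam * (Real.exp t * g t) with hw_def
  have hxtd_eq : ∀ t, xtd t = -(w t) := by
    intro t; simp only [hxtd_def, hw_def]; ring
  set wd : ℝ → ℝ := fun t => (1 - lam) * w t - lam * (xt t - Real.exp t * F t) with hwd_def
  have hwderiv : ∀ t : ℝ, HasDerivAt w (wd t) t := by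
    intro t
    have h1 : HasDerivAt (fun t => lam * xt t) (lam * xtd t) t := (hxtanaly t).const_mul lam
    have he : HasDerivAt Real.exp (Real.exp t) t := Real.hasDerivAt_exp t
    have h2 : HasDerivAt (fun t => Real.exp t * g t)
        (Real.exp t * g t + Real.exp t * (-(F t))) t := by
      have := he.mul (hgderiv t)
      convert this using 1
      · rfl
      · rfl
      · rfl
    have h3 := h1.sub (h2.const_mul lam)
    convert h3 using 1
    · rfl
    · rfl
    · rfl
    simp only [hwd_def, hw_def, hxtd_eq t, hxtd_def]
    ring
  have hEF : ∀ t : ℝ, Real.exp t * F t = genFun P (X t) := by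
    intro t
    simp only [hF_def]
    rw [mul_comm (genFun P (X t)), ← mul_assoc, ← Real.exp_add]
    simp
  -- key differential inequality
  have hwd_ge : ∀ t : ℝ, 0 ≤ t →
      2 * al * w t - (al ^ 2 + om ^ 2) * (1 - xt t) ≤ wd t := by
    intro t ht
    have hxtt : xt t = x t := (hxeq' t ht).symm
    have hx01 := hxIcc t ht
    have htan : 1 + d * (xt t - 1) ≤ genFun P (xt t) := by
      rw [hxtt]; exact CEAux.genFun_tangent hctx hx01.1 hx01.2
    have hXt : X t = xt t := by simp only [hX_def, if_pos ht]; exact hxtt.symm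
    have h2al : 1 - lam = 2 * al := by simp only [hal_def]; ring
    simp only [hwd_def, hEF t, hXt, hsum_sq, h2al]
    nlinarith [htan, hlam0]
  -- w is nonnegative on [0,∞)
  have hwnn : ∀ t : ℝ, 0 ≤ t → 0 ≤ w t := by
    intro t ht
    have hslope : Filter.Tendsto (slope xt t) (nhdsWithin t (Set.Ioi t)) (nhds (xtd t)) := by
      have := hasDerivAt_iff_tendsto_slope.1 (hxtanaly t)
      exact this.mono_left (nhdsWithin_mono t fun y hy => ne_of_gt hy)
    have hle : xtd t ≤ 0 := by
      apply le_of_tendsto hslope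
      filter_upwards [self_mem_nhdsWithin] with y hy
      have hy' : t < y := hy
      have hxy : xt y ≤ xt t := by
        rw [← hxeq' t ht, ← hxeq' y (ht.trans hy'.le)]
        exact hxanti ht (ht.trans hy'.le) hy'.le
      rw [slope_def_field]
      apply div_nonpos_of_nonpos_of_nonneg (by linarith) (by linarith)
    rw [hxtd_eq t] at hle
    linarith
  -- v
  set v : ℝ → ℝ := fun t => 1 - xt t with hv_def
  have hvderiv : ∀ t : ℝ, HasDerivAt v (w t) t := by
    intro t
    have := (hxtanaly t).const_sub 1
    rw [hxtd_eq t] at this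
    simpa [hv_def] using this
  have hv0 : v 0 = 0 := by simp [hv_def, hxt0]
  have hvle1 : ∀ t : ℝ, 0 ≤ t → v t ≤ 1 := by
    intro t ht
    simp only [hv_def]
    have := (hxIcc t ht).1
    rw [hxeq' t ht] at this
    linarith
  -- bridge to derivWithin
  have hdw : derivWithin x (Set.Ici 0) 0 = -(w 0) := by
    have h1 : Set.EqOn x xt (Set.Ici 0) := fun t ht => hxeq' t ht
    rw [derivWithin_congr h1 (hxeq' 0 le_rfl), ← hxtd_eq 0]
    exact ((hxtanaly 0).hasDerivWithinAt).derivWithin (uniqueDiffOn_Ici 0 0 Set.self_mem_Ici)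
  set a : ℝ := w 0 with ha_def
  -- g 0 is nonnegative, so a ≤ lam
  have hg0nn : 0 ≤ g 0 := by
    rw [hgIoi 0 le_rfl]
    exact setIntegral_nonneg measurableSet_Ioi fun s _ => hF0 s
  have ha_eq : a = lam * (1 - g 0) := by
    simp only [ha_def, hw_def, hxt0, Real.exp_zero, one_mul]; ring
  have ha_le : a ≤ lam := by
    rw [ha_eq]
    nlinarith [hg0nn, hlam0]
  -- final goal reduces to: a ≤ exp 2 * exp (−π al/om)
  have hexp_arg : Real.pi * (1 - lam) /
      (2 * (1 / 2 * Real.sqrt (-lam ^ 2 + 2 * (2 * d - 1) * lam - 1))) = Real.pi * al / om := by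
    rw [show (-lam ^ 2 + 2 * (2 * d - 1) * lam - 1) = q from rfl]
    rw [show (2 : ℝ) * (1 / 2 * Real.sqrt q) = 2 * om by rw [hom_def]]
    rw [show Real.pi * (1 - lam) = 2 * (Real.pi * al) by rw [hal_def]; ring]
    rw [mul_div_mul_left _ _ (two_ne_zero)]
  rw [hdw, hexp_arg]
  rw [neg_le_neg_iff]
  -- now goal : a ≤ exp 2 * exp (−(π al/om))
  show a ≤ Real.exp 2 * Real.exp (-(Real.pi * al / om))
  by_cases hcase : Real.pi * al ≤ 2 * om
  · -- trivial case
    have h1 : Real.exp (-(2:ℝ)) ≤ Real.exp (-(Real.pi * al / om)) := by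
      apply Real.exp_le_exp.2
      rw [neg_le_neg_iff, div_le_iff₀ hom0]
      linarith
    have h2 : (1:ℝ) = Real.exp 2 * Real.exp (-(2:ℝ)) := by
      rw [← Real.exp_add]; norm_num
    calc a ≤ lam := ha_le
      _ ≤ 1 := hl2.le
      _ = Real.exp 2 * Real.exp (-(2:ℝ)) := h2
      _ ≤ Real.exp 2 * Real.exp (-(Real.pi * al / om)) := by
          exact mul_le_mul_of_nonneg_left h1 (Real.exp_pos 2).le
  · -- main case
    push_neg at hcase
    set t₀ : ℝ := Real.pi / om - 1 / al with ht₀_def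
    have hom_al : 0 < om / al := div_pos hom0 hal0
    have hom_al_le : om / al ≤ Real.pi / 2 := by
      rw [div_le_div_iff₀ hal0 two_pos]
      linarith
    have ht₀pos : 0 < t₀ := by
      simp only [ht₀_def]
      rw [sub_pos, div_lt_div_iff₀ hal0 hom0]
      have h2om : om < 2 * om := by linarith
      linarith [hcase, h2om]
    have homt₀ : om * t₀ = Real.pi - om / al := by
      have e1 : om * (Real.pi / om) = Real.pi := by
        field_simp
      simp only [ht₀_def, mul_sub, mul_one_div, e1]
    have homt₀_lt : om * t₀ < Real.pi := by rw [homt₀]; linarith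
    have homt₀_pos : 0 < om * t₀ := mul_pos hom0 ht₀pos
    -- explicit comparison functions
    set V : ℝ → ℝ := fun t => Real.exp (al * t) * Real.sin (om * t) with hV_def
    set W : ℝ → ℝ := fun t =>
      Real.exp (al * t) * (al * Real.sin (om * t) + om * Real.cos (om * t)) with hW_def
    have hVd : ∀ t : ℝ, HasDerivAt V (W t) t := by
      intro t
      have h1 := CEAux.hasDerivAt_exp_mul al t
      have h2 := CEAux.hasDerivAt_sin_mul om t
      have := h1.mul h2
      convert this using 1
      · rfl
      · rfl
      · rfl
      simp only [hW_def]; ring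
    have hWd : ∀ t : ℝ, HasDerivAt W (2 * al * W t - (al ^ 2 + om ^ 2) * V t) t := by
      intro t
      have h1 := CEAux.hasDerivAt_exp_mul al t
      have h2 := CEAux.hasDerivAt_sin_mul om t
      have h3 := CEAux.hasDerivAt_cos_mul om t
      have h4 : HasDerivAt (fun t : ℝ => al * Real.sin (om * t) + om * Real.cos (om * t))
          (al * (om * Real.cos (om * t)) + om * (-(om * Real.sin (om * t)))) t :=
        (h2.const_mul al).add (h3.const_mul om)
      have := h1.mul h4
      convert this using 1
      · rfl
      · rfl
      · rfl
      simp only [hW_def, hV_def]; ring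
    -- Wronskian-type function
    set Wr : ℝ → ℝ := fun t => w t * V t - v t * W t with hWr_def
    have hWrd : ∀ t : ℝ, HasDerivAt Wr
        (wd t * V t - v t * (2 * al * W t - (al ^ 2 + om ^ 2) * V t)) t := by
      intro t
      have h1 := (hwderiv t).mul (hVd t)
      have h2 := (hvderiv t).mul (hWd t)
      have := h1.sub h2
      convert this using 1
      · rfl
      · rfl
      · rfl
      ring
    have hWr0 : Wr 0 = 0 := by
      simp [hWr_def, hV_def, hW_def, hv0]
    -- Gronwall: Wr ≥ 0 on [0, t₀]
    have hVnn : ∀ t ∈ Set.Icc (0:ℝ) t₀, 0 ≤ V t := by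
      intro t ht
      apply mul_nonneg (Real.exp_pos _).le
      apply Real.sin_nonneg_of_nonneg_of_le_pi (mul_nonneg hom0.le ht.1)
      have : om * t ≤ om * t₀ := mul_le_mul_of_nonneg_left ht.2 hom0.le
      linarith
    set Φ : ℝ → ℝ := fun t => Real.exp (-(2 * al) * t) * Wr t with hΦ_def
    have hΦd : ∀ t : ℝ, HasDerivAt Φ
        (Real.exp (-(2 * al) * t) *
          ((wd t * V t - v t * (2 * al * W t - (al ^ 2 + om ^ 2) * V t)) - 2 * al * Wr t)) t := by
      intro t
      have h1 := CEAux.hasDerivAt_exp_mul (-(2 * al)) t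
      have := h1.mul (hWrd t)
      convert this using 1
      · rfl
      · rfl
      · rfl
      ring
    have hΦmono : MonotoneOn Φ (Set.Icc 0 t₀) := by
      apply monotoneOn_of_deriv_nonneg (convex_Icc 0 t₀)
      · exact Continuous.continuousOn (by
          have : Differentiable ℝ Φ := fun t => (hΦd t).differentiableAt
          exact this.continuous)
      · intro t _
        exact (hΦd t).differentiableAt.differentiableWithinAt
      · intro t ht
        rw [interior_Icc] at ht
        rw [(hΦd t).deriv]
        apply mul_nonneg (Real.exp_pos _).le
        have hkey : (wd t * V t - v t * (2 * al * W t - (al ^ 2 + om ^ 2) * V t)) - 2 * al * Wr t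
            = V t * (wd t - 2 * al * w t + (al ^ 2 + om ^ 2) * v t) := by
          simp only [hWr_def]; ring
        rw [hkey]
        apply mul_nonneg (hVnn t ⟨ht.1.le, ht.2.le⟩)
        have := hwd_ge t ht.1.le
        simp only [hv_def]
        nlinarith [this]
    have hWrnn : ∀ t ∈ Set.Icc (0:ℝ) t₀, 0 ≤ Wr t := by
      intro t ht
      have h1 : Φ 0 ≤ Φ t := hΦmono (Set.left_mem_Icc.2 ht₀pos.le) ht ht.1
      have h2 : Φ 0 = 0 := by simp [hΦ_def, hWr0]
      have := h2 ▸ h1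
      simp only [hΦ_def] at this
      nlinarith [Real.exp_pos (-(2 * al) * t), this]
      -- V positive on (0, t₀]
    have hVpos : ∀ t ∈ Set.Ioc (0:ℝ) t₀, 0 < V t := by
      intro t ht
      apply mul_pos (Real.exp_pos _)
      apply Real.sin_pos_of_pos_of_lt_pi (mul_pos hom0 ht.1)
      have : om * t ≤ om * t₀ := mul_le_mul_of_nonneg_left ht.2 hom0.le
      linarith
    have hVt0pos : 0 < V t₀ := hVpos t₀ ⟨ht₀pos, le_rfl⟩
    have hvcont : Continuous v := by
      have : Differentiable ℝ v := fun t => (hvderiv t).differentiableAt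
      exact this.continuous
    have hVcont : Continuous V := by
      have : Differentiable ℝ V := fun t => (hVd t).differentiableAt
      exact this.continuous
    -- the ratio v / V is monotone on (0, t₀]
    set φ : ℝ → ℝ := fun t => v t / V t with hφ_def
    have hφmono : MonotoneOn φ (Set.Ioc 0 t₀) := by
      apply monotoneOn_of_deriv_nonneg (convex_Ioc 0 t₀)
      · exact ContinuousOn.div hvcont.continuousOn hVcont.continuousOn
          (fun t ht => (hVpos t ht).ne')
      · intro t ht
        rw [interior_Ioc] at ht
        have hVt := hVpos t ⟨ht.1, ht.2.le⟩
        exact ((hvderiv t).div (hVd t) hVt.ne').differentiableAt.differentiableWithinAt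
      · intro t ht
        rw [interior_Ioc] at ht
        have hVt := hVpos t ⟨ht.1, ht.2.le⟩
        have hd2 := (hvderiv t).div (hVd t) hVt.ne'
        rw [show φ = v / V from rfl, hd2.deriv]
        apply div_nonneg _ (sq_nonneg _)
        have := hWrnn t ⟨ht.1.le, ht.2.le⟩
        simp only [hWr_def] at this
        linarith
    -- limit of the ratio at 0⁺
    have hv_slope : Filter.Tendsto (fun t : ℝ => v t / t)
        (nhdsWithin 0 (Set.Ioi 0)) (nhds a) := by
      have h := hasDerivAt_iff_tendsto_slope.1 (hvderiv 0)
      have h' := h.mono_left (nhdsWithin_mono 0 fun y (hy : y ∈ Set.Ioi (0:ℝ)) =>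
        (ne_of_gt hy : y ≠ 0))
      refine h'.congr fun t => ?_
      simp [slope_def_field, hv0]
    have hW0 : W 0 = om := by simp [hW_def]
    have hV_slope : Filter.Tendsto (fun t : ℝ => V t / t)
        (nhdsWithin 0 (Set.Ioi 0)) (nhds om) := by
      have h := hasDerivAt_iff_tendsto_slope.1 (hVd 0)
      rw [hW0] at h
      have h' := h.mono_left (nhdsWithin_mono 0 fun y (hy : y ∈ Set.Ioi (0:ℝ)) =>
        (ne_of_gt hy : y ≠ 0))
      refine h'.congr fun t => ?_
      have hV0 : V 0 = 0 := by simp [hV_def]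
      simp [slope_def_field, hV0]
    have hratio_lim : Filter.Tendsto φ (nhdsWithin 0 (Set.Ioi 0)) (nhds (a / om)) := by
      have hdiv := hv_slope.div hV_slope hom0.ne'
      refine Filter.Tendsto.congr' ?_ hdiv
      filter_upwards [Ioc_mem_nhdsGT_of_mem (Set.mem_Ico.2 ⟨le_rfl, ht₀pos⟩)] with t ht
      have hVt := hVpos t ht
      simp only [Pi.div_apply]
      exact CEAux.ratio_helper ht.1.ne' hVt.ne'
    have hle1 : a / om ≤ φ t₀ := by
      apply le_of_tendsto hratio_lim
      filter_upwards [Ioc_mem_nhdsGT_of_mem (Set.mem_Ico.2 ⟨le_rfl, ht₀pos⟩)] with t ht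
      exact hφmono ht (Set.right_mem_Ioc.2 ht₀pos) ht.2
    -- hence a * V t₀ ≤ om
    have haV : a * V t₀ ≤ v t₀ * om := by
      have := (div_le_div_iff₀ hom0 hVt0pos).1 hle1
      linarith [this]
    have ha0 : 0 ≤ a := hwnn 0 le_rfl
    have haom : a * V t₀ ≤ om := CEAux.arith1 haV (hvle1 t₀ ht₀pos.le) hom0
    -- lower bound for V t₀
    set E : ℝ := Real.exp (Real.pi * al / om) with hE_def
    have hEpos : 0 < E := Real.exp_pos _
    set B : ℝ := Real.exp (Real.pi * al / om - 1) * (2 / Real.pi * (om / al)) with hB_def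
    have hBpos : 0 < B := by
      apply mul_pos (Real.exp_pos _)
      apply mul_pos (div_pos two_pos Real.pi_pos) hom_al
    have hexp_t₀ : al * t₀ = Real.pi * al / om - 1 := by
      simp only [ht₀_def]
      rw [mul_sub, mul_one_div, div_self hal0.ne']
      ring_nf
    have hsin_eq : Real.sin (om * t₀) = Real.sin (om / al) := by
      rw [homt₀, Real.sin_pi_sub]
    have hsin_ge : 2 / Real.pi * (om / al) ≤ Real.sin (om / al) :=
      Real.mul_le_sin hom_al.le hom_al_le
    have hVB : B ≤ V t₀ := by
      simp only [hV_def, hB_def, hexp_t₀, hsin_eq]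
      exact mul_le_mul_of_nonneg_left hsin_ge (Real.exp_pos _).le
    have haB : a * B ≤ om := CEAux.arith2 haom hVB ha0
    -- numeric conclusion
    have hBeq : B * (Real.exp 1 * (Real.pi * al)) = E * (2 * om) := by
      simp only [hB_def, hE_def, Real.exp_sub]
      field_simp
    have hstep : a * E * (2 * om) ≤ om * (Real.exp 1 * (Real.pi * al)) :=
      CEAux.arith3 haB hBeq (mul_pos (Real.exp_pos 1) (mul_pos Real.pi_pos hal0))
    have hal_le : al ≤ 1 / 2 := by simp only [hal_def]; linarith
    have hpial : Real.pi * al ≤ 2 := CEAux.arith5 Real.pi_le_four hal_le hal0.le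
    have he12 : Real.exp 1 ≤ Real.exp 2 := Real.exp_le_exp.2 one_le_two
    rw [Real.exp_neg, ← div_eq_mul_inv, le_div_iff₀ hEpos]
    show a * E ≤ Real.exp 2
    exact CEAux.arith4 hstep hpial he12 hom0 (Real.exp_pos 1)
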